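/- Let π be either player and let Γ and Δ be runs such that Δ is a π-delay of Γ. Then for every infinite bitstring v, the run Δ^{≼v} is a π-delay of the run Γ^{≼v}. -/

import Mathlib

/- ============================================================
   Computability Logic: runs, constant games, delays, static
   games, and the tight/loose toggling-branching recurrences.
   ============================================================ -/

/-- The two players: `top` (⊤, the machine) and `bot` (⊥, the environment). -/
inductive Player : Type
  | top : Player
  | bot : Player
deriving DecidableEq

/-- The adversary (opposite) of a player. -/
def Player.opp : Player → Player
  | .top => .bot
  | .bot => .top

/-- Symbols of the fixed move alphabet: the bits `0` and `1`, the period `.`,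
the colon `:`, and (countably many) other characters. -/
inductive CSym : Type
  | b0 : CSym
  | b1 : CSym
  | dot : CSym
  | colon : CSym
  | ch : ℕ → CSym
deriving DecidableEq

/-- A move is a finite string over the fixed alphabet. -/
abbrev Move := List CSym

/-- A labmove is a move together with the label of the player who made it. -/
abbrev Labmove := Player × Move

/-- A run is a finite or infinite sequence of labmoves. -/
abbrev Run := Stream'.Seq Labmove

/-- A position is a finite run. -/
abbrev Position := List Labmove

/-- The symbol encoding a bit. -/
def bitSym (b : Bool) : CSym := if b then .b1 else .b0

/-- The move that is the bare bitstring `w`. -/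
def bitsMove (w : List Bool) : Move := w.map bitSym

/-- The (replicative-style) move `w:`. -/
def repMove (w : List Bool) : Move := bitsMove w ++ [.colon]

/-- The (non-replicative-style) move `w.α`. -/
def dotMove (w : List Bool) (α : Move) : Move := bitsMove w ++ (.dot :: α)

/-- Decode a move that is a bare bitstring. -/
def asBits : Move → Option (List Bool)
  | [] => some []
  | .b0 :: r => (asBits r).map (false :: ·)
  | .b1 :: r => (asBits r).map (true :: ·)
  | _ => none

/-- Decode a move of the form `w:` (`w` a bitstring). -/
def asRep : Move → Option (List Bool)
  | [.colon] => some []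
  | .b0 :: r => (asRep r).map (false :: ·)
  | .b1 :: r => (asRep r).map (true :: ·)
  | _ => none

/-- Decode a move of the form `w.α` (`w` a bitstring, `α` a move), splitting at
the (unique such) period. -/
def splitDot : Move → Option (List Bool × Move)
  | .dot :: r => some ([], r)
  | .b0 :: r => (splitDot r).map (fun p => (false :: p.1, p.2))
  | .b1 :: r => (splitDot r).map (fun p => (true :: p.1, p.2))
  | _ => none

/-- Infinite bitstrings. -/
abbrev IStr := ℕ → Bool

/-- The length-`n` initial segment of an infinite bitstring. -/
def prefOf (n : ℕ) (v : IStr) : List Bool := (List.range n).map v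

/-- `u` is a finite initial segment of the infinite bitstring `v`. -/
def IsPref (u : List Bool) (v : IStr) : Prop := u = prefOf u.length v

instance (u : List Bool) (v : IStr) : Decidable (IsPref u v) := by
  unfold IsPref; infer_instance

/-- The finite bitstring `w` with infinitely many `0`s appended. -/
def ezero (w : List Bool) : IStr := fun i => w.getD i false

/-- The finite bitstring `w` followed by the infinite bitstring `v`. -/
def capp (w : List Bool) (v : IStr) : IStr :=
  fun i => if i < w.length then w.getD i false else v (i - w.length)

/-- The indices of `s` whose entry is kept by the filtering function `p`. -/
def fmPred {α β : Type*} (p : α → Option β) (s : Stream'.Seq α) (i : ℕ) : Prop :=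
  ∃ a, s.get? i = some a ∧ (p a).isSome

/-- `p` has at least `n+1` witnesses. -/
def HasNth (p : ℕ → Prop) (n : ℕ) : Prop :=
  ∀ hf : (setOf p).Finite, n < hf.toFinset.card

open Classical in
/-- The subsequence of a (finite or infinite) sequence obtained by
filtering/translating its entries through `p`. -/
noncomputable def seqFilterMap {α β : Type*} (p : α → Option β) (s : Stream'.Seq α) :
    Stream'.Seq β := by
  refine ⟨fun k => if HasNth (fmPred p s) k
    then ((s.get? (Nat.nth (fmPred p s) k)).bind p) else none, ?_⟩
  intro n hn
  have hval : ∀ k, HasNth (fmPred p s) k →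
      (if HasNth (fmPred p s) k then ((s.get? (Nat.nth (fmPred p s) k)).bind p) else none)
        ≠ none := by
    intro k hk
    obtain ⟨a, ha, hpa⟩ := Nat.nth_mem (p := fmPred p s) k hk
    rw [if_pos hk, ha]
    simpa [Option.isSome_iff_ne_none] using hpa
  by_cases h : HasNth (fmPred p s) (n + 1)
  · exact absurd hn (hval n (fun hf => lt_of_le_of_lt (Nat.le_succ n) (h hf)))
  · exact if_neg h

/-- The filtered subsequence of a position (finite-run analogue of `seqFilterMap`). -/
def listFilterMap {β : Type*} (p : Labmove → Option β) (Φ : Position) : List β :=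
  Φ.filterMap p

/-- The filtering function for `Ω^{≼v}`: keep labmoves `π u.α` with `u` an initial
segment of `v`, turning them into `π α`. -/
def subFn (v : IStr) (lm : Labmove) : Option Labmove :=
  match splitDot lm.2 with
  | some (u, α) => if IsPref u v then some (lm.1, α) else none
  | none => none

/-- `Ω^{≼v}` for a run `Ω`. -/
noncomputable def subAt (v : IStr) (Γ : Run) : Run := seqFilterMap (subFn v) Γ

/-- `Φ^{≼v}` for a position `Φ`. -/
def subAtL (v : IStr) (Φ : Position) : Position := Φ.filterMap (subFn v)

/-- The result of changing every label in a run to its opposite. -/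
def negRun (Γ : Run) : Run := Γ.map (fun lm => (lm.1.opp, lm.2))

/-- The subsequence of `π`-labeled moves of a run. -/
noncomputable def subseqOf (π : Player) (Γ : Run) : Run :=
  seqFilterMap (fun lm => if lm.1 = π then some lm else none) Γ

/-- The subsequence of `π`-labeled moves of a position. -/
def subL (π : Player) (Φ : Position) : Position :=
  Φ.filter (fun lm => decide (lm.1 = π))

/-- The indices of the `π`-labeled moves of a run. -/
def labPred (π : Player) (Γ : Run) (i : ℕ) : Prop := ∃ m, Γ.get? i = some (π, m)

/-- `Δ` is a `π`-delay of `Γ`: (1) for both players `π'`, the subsequence of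
`π'`-labeled moves of `Δ` is identical to that of `Γ`; (2) whenever the `n`-th
`π`-labeled move is made later than the `k`-th `¬π`-labeled move in `Γ`, so is
it in `Δ`. -/
def Delay (π : Player) (Δ Γ : Run) : Prop :=
  (∀ π' : Player, subseqOf π' Δ = subseqOf π' Γ) ∧
  (∀ n k : ℕ, HasNth (labPred π Γ) n → HasNth (labPred π.opp Γ) k →
    Nat.nth (labPred π Γ) n > Nat.nth (labPred π.opp Γ) k →
    Nat.nth (labPred π Δ) n > Nat.nth (labPred π.opp Δ) k)

/-- A constant game: a set of legal runs and an assignment of winners. -/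
structure Game where
  legal : Run → Prop
  wins : Run → Player

/-- Well-formedness of a constant game: the empty position is legal, and a run
is legal iff all of its finite initial segments are. -/
def Game.IsGame (A : Game) : Prop :=
  A.legal (Stream'.Seq.ofList []) ∧
  ∀ Γ : Run, A.legal Γ ↔ ∀ n : ℕ, A.legal (Stream'.Seq.ofList (Stream'.Seq.take n Γ))

/-- The run `Γ` is `π`-illegal in `A`: its shortest illegal initial segment has
the form `⟨Φ, πα⟩`. -/
def Game.IllegalBy (A : Game) (π : Player) (Γ : Run) : Prop :=
  ∃ n : ℕ,
    (∀ m ≤ n, A.legal (Stream'.Seq.ofList (Stream'.Seq.take m Γ))) ∧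
    ¬ A.legal (Stream'.Seq.ofList (Stream'.Seq.take (n + 1) Γ)) ∧
    ∃ m : Move, Γ.get? n = some (π, m)

/-- `Γ` is a `π`-won run of `A`: either `Γ` is legal and `Wn` names `π`, or `Γ`
is `¬π`-illegal (an illegal run is won by the adversary of the first offender). -/
def Game.won (A : Game) (π : Player) (Γ : Run) : Prop :=
  (A.legal Γ ∧ A.wins Γ = π) ∨ A.IllegalBy π.opp Γ

/-- A constant game is static iff `π`-won runs are preserved by `π`-delays. -/
def Game.Static (A : Game) : Prop :=
  ∀ (π : Player) (Γ Δ : Run), Delay π Δ Γ → A.won π Γ → A.won π Δ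

/-- The negation `¬A` of a constant game: the roles of the players are interchanged. -/
def Game.neg (A : Game) : Game where
  legal Γ := A.legal (negRun Γ)
  wins Γ := (A.wins (negRun Γ)).opp

/-- `w` is an actual node of the position `Φ`: `w` is empty, or `w = u0` or
`w = u1` for some bitstring `u` such that `Φ` contains the move `u:`. -/
def ActualNode (Φ : Position) (w : List Bool) : Prop :=
  w = [] ∨ ∃ (u : List Bool) (b : Bool), w = u ++ [b] ∧ ∃ π : Player, (π, repMove u) ∈ Φ

/-- `w` is an outer actual node of `Φ`: an actual node that is not a proper
prefix of any other actual node of `Φ`. -/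
def OuterNode (Φ : Position) (w : List Bool) : Prop :=
  ActualNode Φ w ∧ ∀ w' : List Bool, ActualNode Φ w' → w <+: w' → w = w'

/-- `m` is a legal move by `π` in the legal position `Φ` of `⫰ᵀA`: a switch
move, a replicative move, or a non-replicative move. -/
def TightMove (A : Game) (Φ : Position) (π : Player) (m : Move) : Prop :=
  (π = .bot ∧ ∃ w : List Bool, asBits m = some w ∧ ActualNode Φ w) ∨
  (π = .bot ∧ ∃ w : List Bool, asRep m = some w ∧ OuterNode Φ w) ∨
  (∃ (w : List Bool) (α : Move), splitDot m = some (w, α) ∧ ActualNode Φ w ∧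
    ∀ v : IStr, A.legal (Stream'.Seq.ofList (subAtL (capp w v) Φ ++ [(π, α)])))

/-- The legal positions of `⫰ᵀA`. -/
inductive TightLegalPos (A : Game) : Position → Prop
  | nil : TightLegalPos A []
  | snoc {Φ : Position} {π : Player} {m : Move} :
      TightLegalPos A Φ → TightMove A Φ π m → TightLegalPos A (Φ ++ [(π, m)])

/-- The indices of the switch moves (by player `π`) of a run: `π`-labeled moves
whose move part is a bare bitstring. -/
def SwSetP (π : Player) (Γ : Run) : Set ℕ :=
  {i | ∃ (m : Move) (w : List Bool), Γ.get? i = some (π, m) ∧ asBits m = some w}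

open Classical in
/-- The index of the last switch move (by `π`) of a run, when there are finitely
many and at least one (junk value `0` otherwise). -/
noncomputable def lastSwitchIdxP (π : Player) (Γ : Run) : ℕ :=
  if h : (SwSetP π Γ).Finite ∧ (SwSetP π Γ).Nonempty then
    h.1.toFinset.max' (h.1.toFinset_nonempty.mpr h.2)
  else 0

open Classical in
/-- The bitstring of the last switch move (by `π`) of a run; the empty bitstring
if there are no switch moves (or infinitely many). -/
noncomputable def lastSwitchBitsP (π : Player) (Γ : Run) : List Bool :=
  if (SwSetP π Γ).Finite ∧ (SwSetP π Γ).Nonempty then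
    ((Γ.get? (lastSwitchIdxP π Γ)).bind (fun lm => asBits lm.2)).getD []
  else []

/-- The infinite bitstring `t`: the last (`⊥`-made) switch move of `Γ` with
infinitely many `0`s appended, or the infinite string of `0`s if there are no
switch moves. -/
noncomputable def tStream (Γ : Run) : IStr := ezero (lastSwitchBitsP .bot Γ)

open Classical in
/-- The tight toggling-branching recurrence `⫰ᵀA`. -/
noncomputable def tight (A : Game) : Game where
  legal Γ := ∀ n : ℕ, TightLegalPos A (Stream'.Seq.take n Γ)
  wins Γ :=
    if (SwSetP .bot Γ).Finite ∧ A.won .bot (subAt (tStream Γ) Γ) then .bot else .top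

/-- The tight toggling-branching corecurrence `⫯ᵀA = ¬⫰ᵀ¬A`. -/
noncomputable def cotight (A : Game) : Game := Game.neg (tight (Game.neg A))

/-- The shape of legal labmoves of `⫰ᴸA`: `⊥w` (a switch move) for a bitstring
`w`, or `πw.α`. -/
def LooseShape (lm : Labmove) : Prop :=
  (lm.1 = .bot ∧ ∃ w : List Bool, asBits lm.2 = some w) ∨
  (∃ (w : List Bool) (α : Move), splitDot lm.2 = some (w, α))

open Classical in
/-- The loose toggling-branching recurrence `⫰ᴸA`. -/
noncomputable def loose (A : Game) : Game where
  legal Γ := (∀ (i : ℕ) (lm : Labmove), Γ.get? i = some lm → LooseShape lm) ∧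
    ∀ v : IStr, A.legal (subAt v Γ)
  wins Γ :=
    if (SwSetP .bot Γ).Finite ∧ A.won .bot (subAt (tStream Γ) Γ) then .bot else .top

/-- The loose toggling-branching corecurrence `⫯ᴸA = ¬⫰ᴸ¬A`. -/
noncomputable def coloose (A : Game) : Game := Game.neg (loose (Game.neg A))

/-- The sequence of (bitstrings of) switch moves made by `π` in a run, in order. -/
noncomputable def swSeq (π : Player) (Γ : Run) : Stream'.Seq (List Bool) :=
  seqFilterMap (fun lm => if lm.1 = π then asBits lm.2 else none) Γ

/-- The move `i.α` (component prefix for parallel combinations). -/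
def compMove (i : ℕ) (α : Move) : Move := .ch i :: .dot :: α

/-- `Δ^{i.}`: the labmoves of the form `π i.α` of `Δ`, with the prefix `i.` removed. -/
noncomputable def proj (i : ℕ) (Δ : Run) : Run :=
  seqFilterMap (fun lm =>
    match lm.2 with
    | .ch j :: .dot :: α => if j = i then some (lm.1, α) else none
    | _ => none) Δ

open Classical in
/-- The parallel disjunction `A ∨ B`. -/
noncomputable def Game.por (A B : Game) : Game where
  legal Δ :=
    (∀ (k : ℕ) (lm : Labmove), Δ.get? k = some lm →
      ∃ (i : ℕ) (α : Move), (i = 1 ∨ i = 2) ∧ lm.2 = compMove i α) ∧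
    A.legal (proj 1 Δ) ∧ B.legal (proj 2 Δ)
  wins Δ :=
    if A.won .top (proj 1 Δ) ∨ B.won .top (proj 2 Δ) then .top else .bot


section AuxDelay
open Classical


lemma hasNth_mono {p : ℕ → Prop} {m n : ℕ} (h : m ≤ n) (hn : HasNth p n) : HasNth p m :=
  fun hf => lt_of_le_of_lt h (hn hf)

lemma hasNth_of_count {p : ℕ → Prop} {x n : ℕ} (hx : p x) (hc : Nat.count p x = n) :
    HasNth p n := fun hf => hc ▸ Nat.count_lt_card hf hx

lemma nth_lt_nth'' {p : ℕ → Prop} {m n : ℕ} (h : m < n) (hn : HasNth p n) :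
    Nat.nth p m < Nat.nth p n := Nat.nth_lt_nth' h hn

lemma nth_le_nth'' {p : ℕ → Prop} {m n : ℕ} (h : m ≤ n) (hn : HasNth p n) :
    Nat.nth p m ≤ Nat.nth p n := by
  rcases eq_or_lt_of_le h with rfl | h
  · exact le_rfl
  · exact (nth_lt_nth'' h hn).le

/-- The key counting lemma. -/
lemma count_filter_eq {K T : ℕ → Prop} (hTK : ∀ i, T i → K i) {j : ℕ} (hj : HasNth K j) :
    Nat.count T (Nat.nth K j) = Nat.count (fun i => HasNth K i ∧ T (Nat.nth K i)) j := by
  classical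
  rw [Nat.count_eq_card_filter_range, Nat.count_eq_card_filter_range]
  apply Finset.card_bij (fun x _ => Nat.count K x)
  · intro x hx
    simp only [Finset.mem_filter, Finset.mem_range] at hx ⊢
    obtain ⟨hxlt, hTx⟩ := hx
    have hKx := hTK _ hTx
    have hnc : Nat.nth K (Nat.count K x) = x := Nat.nth_count hKx
    have hHN : HasNth K (Nat.count K x) := hasNth_of_count hKx rfl
    refine ⟨?_, hHN, by rwa [hnc]⟩
    by_contra hle
    push_neg at hle
    have := nth_le_nth'' hle hHN
    rw [hnc] at this
    exact absurd hxlt (not_lt.mpr this)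
  · intro x hx y hy hxy
    simp only [Finset.mem_filter, Finset.mem_range] at hx hy
    have hKx := hTK _ hx.2
    have hKy := hTK _ hy.2
    have := Nat.nth_count hKx
    rw [hxy, Nat.nth_count hKy] at this
    exact this.symm
  · intro i hi
    simp only [Finset.mem_filter, Finset.mem_range] at hi
    obtain ⟨hilt, hHN, hT⟩ := hi
    refine ⟨Nat.nth K i, ?_, Nat.count_nth hHN⟩
    simp only [Finset.mem_filter, Finset.mem_range]
    exact ⟨nth_lt_nth'' hilt hj, hT⟩

lemma nth_trans {K T : ℕ → Prop} (hTK : ∀ i, T i → K i) {n : ℕ}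
    (hS : HasNth (fun i => HasNth K i ∧ T (Nat.nth K i)) n) :
    HasNth T n ∧ Nat.nth T n = Nat.nth K (Nat.nth (fun i => HasNth K i ∧ T (Nat.nth K i)) n) := by
  classical
  have hSj : HasNth K (Nat.nth (fun i => HasNth K i ∧ T (Nat.nth K i)) n) ∧
      T (Nat.nth K (Nat.nth (fun i => HasNth K i ∧ T (Nat.nth K i)) n)) := Nat.nth_mem n hS
  set j := Nat.nth (fun i => HasNth K i ∧ T (Nat.nth K i)) n with hjdef
  have hcount : Nat.count T (Nat.nth K j) = n := by
    rw [count_filter_eq hTK hSj.1]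
    exact Nat.count_nth hS
  have hT : T (Nat.nth K j) := hSj.2
  refine ⟨hasNth_of_count hT hcount, ?_⟩
  rw [← hcount, Nat.nth_count hT]

lemma hasNthS_of_hasNthT {K T : ℕ → Prop} (hTK : ∀ i, T i → K i) {n : ℕ}
    (hT : HasNth T n) :
    HasNth (fun i => HasNth K i ∧ T (Nat.nth K i)) n := by
  classical
  have hTx : T (Nat.nth T n) := Nat.nth_mem n hT
  have hKx : K (Nat.nth T n) := hTK _ hTx
  have hHN : HasNth K (Nat.count K (Nat.nth T n)) := hasNth_of_count hKx rfl
  have hnc : Nat.nth K (Nat.count K (Nat.nth T n)) = Nat.nth T n := Nat.nth_count hKx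
  refine hasNth_of_count (p := fun i => HasNth K i ∧ T (Nat.nth K i))
    (x := Nat.count K (Nat.nth T n)) ⟨hHN, by rwa [hnc]⟩ ?_
  have := count_filter_eq hTK hHN
  rw [hnc] at this
  have h2 := this.symm.trans (Nat.count_nth hT)
  convert h2 using 2


lemma seqFilterMap_get? {α β : Type*} (p : α → Option β) (s : Stream'.Seq α) (k : ℕ) :
    (seqFilterMap p s).get? k =
      if HasNth (fmPred p s) k then (s.get? (Nat.nth (fmPred p s) k)).bind p else none := rfl

lemma fmPred_combined {α β γ : Type*} (p : β → Option γ) (q : α → Option β)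
    (s : Stream'.Seq α) :
    fmPred p (seqFilterMap q s) = fun j => HasNth (fmPred q s) j ∧
      fmPred (fun a => (q a).bind p) s (Nat.nth (fmPred q s) j) := by
  funext j
  apply propext
  constructor
  · rintro ⟨c, hc, hpc⟩
    rw [seqFilterMap_get?] at hc
    by_cases h : HasNth (fmPred q s) j
    · rw [if_pos h] at hc
      rcases hs : s.get? (Nat.nth (fmPred q s) j) with _ | a
      · rw [hs] at hc; cases hc
      · rw [hs, Option.bind_some] at hc
        refine ⟨h, a, hs, ?_⟩
        show ((q a).bind p).isSome = true
        rw [hc, Option.bind_some]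
        exact hpc
    · rw [if_neg h] at hc; cases hc
  · rintro ⟨h, a, hs, hqp⟩
    have hqp' : ((q a).bind p).isSome := hqp
    rcases hq : q a with _ | b
    · rw [hq, Option.bind_none] at hqp'; cases hqp'
    · rw [hq, Option.bind_some] at hqp'
      refine ⟨b, ?_, hqp'⟩
      rw [seqFilterMap_get?, if_pos h, hs, Option.bind_some, hq]

lemma fmPred_sub {α β γ : Type*} (p : β → Option γ) (q : α → Option β)
    (s : Stream'.Seq α) :
    ∀ i, fmPred (fun a => (q a).bind p) s i → fmPred q s i := by
  rintro i ⟨a, ha, hqp⟩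
  have hqp' : ((q a).bind p).isSome := hqp
  refine ⟨a, ha, ?_⟩
  rcases h : q a with _ | b
  · rw [h, Option.bind_none] at hqp'; cases hqp'
  · simp [h]

lemma seqFilterMap_comp {α β γ : Type*} (p : β → Option γ) (q : α → Option β)
    (s : Stream'.Seq α) :
    seqFilterMap p (seqFilterMap q s) = seqFilterMap (fun a => (q a).bind p) s := by
  apply Stream'.Seq.ext
  intro k
  have hL := seqFilterMap_get? p (seqFilterMap q s) k
  have hR := seqFilterMap_get? (fun a => (q a).bind p) s k
  rw [hL, hR, fmPred_combined p q s]
  by_cases h : HasNth (fun j => HasNth (fmPred q s) j ∧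
      fmPred (fun a => (q a).bind p) s (Nat.nth (fmPred q s) j)) k
  · obtain ⟨hTk, heq⟩ := nth_trans (fmPred_sub p q s) h
    have hmem := Nat.nth_mem (p := fun j => HasNth (fmPred q s) j ∧
      fmPred (fun a => (q a).bind p) s (Nat.nth (fmPred q s) j)) k h
    rw [if_pos h, if_pos hTk, seqFilterMap_get?, if_pos hmem.1, heq]
    rcases hs : s.get? (Nat.nth (fmPred q s) (Nat.nth (fun j => HasNth (fmPred q s) j ∧
        fmPred (fun a => (q a).bind p) s (Nat.nth (fmPred q s) j)) k)) with _ | a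
    · rfl
    · rw [Option.bind_some, Option.bind_some]
  · have hTk : ¬ HasNth (fmPred (fun a => (q a).bind p) s) k :=
      fun hh => h (hasNthS_of_hasNthT (fmPred_sub p q s) hh)
    rw [if_neg h, if_neg hTk]

/-- `subFn` preserves the label. -/
lemma subFn_fst {v : IStr} {lm lm' : Labmove} (h : subFn v lm = some lm') :
    lm'.1 = lm.1 := by
  unfold subFn at h
  split at h
  · split at h
    · cases h; rfl
    · cases h
  · cases h

/-- The label-filtering function. -/
def labf (π' : Player) : Labmove → Option Labmove :=
  fun lm => if lm.1 = π' then some lm else none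

lemma subseqOf_eq (π' : Player) (Θ : Run) : subseqOf π' Θ = seqFilterMap (labf π') Θ := rfl

lemma fmPred_labf (π' : Player) (Θ : Run) : fmPred (labf π') Θ = labPred π' Θ := by
  funext i
  apply propext
  constructor
  · rintro ⟨⟨pl, m⟩, ha, hsome⟩
    by_cases h : pl = π'
    · subst h; exact ⟨m, ha⟩
    · simp [labf, h] at hsome
  · rintro ⟨m, hm⟩
    exact ⟨(π', m), hm, by simp [labf]⟩

lemma labf_subFn_comm (π' : Player) (v : IStr) :
    (fun a => (subFn v a).bind (labf π')) = (fun a => (labf π' a).bind (subFn v)) := by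
  funext a
  rcases h : subFn v a with _ | lm'
  · simp only [Option.bind_none]
    by_cases hl : a.1 = π' <;> simp [labf, hl, h]
  · have hfst := subFn_fst h
    by_cases hl : a.1 = π'
    · simp [labf, hfst, hl, h]
    · simp [labf, hfst, hl, h]

/-- Part 1 of the delay conditions. -/
lemma subseqOf_subAt (π' : Player) (v : IStr) (Θ : Run) :
    subseqOf π' (subAt v Θ) = seqFilterMap (subFn v) (subseqOf π' Θ) := by
  rw [subseqOf_eq, subAt, seqFilterMap_comp, labf_subFn_comm, subseqOf_eq,
    seqFilterMap_comp]

/-- The kept (surviving) π'-labeled indices of `Θ`. -/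
def TfP (v : IStr) (π' : Player) (Θ : Run) : ℕ → Prop :=
  fun i => fmPred (subFn v) Θ i ∧ labPred π' Θ i

lemma TfP_sub_K (v : IStr) (π' : Player) (Θ : Run) :
    ∀ i, TfP v π' Θ i → fmPred (subFn v) Θ i := fun _ h => h.1

lemma TfP_sub_lab (v : IStr) (π' : Player) (Θ : Run) :
    ∀ i, TfP v π' Θ i → labPred π' Θ i := fun _ h => h.2

lemma labPred_subAt (v : IStr) (π' : Player) (Θ : Run) :
    labPred π' (subAt v Θ) = fun j => HasNth (fmPred (subFn v) Θ) j ∧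
      TfP v π' Θ (Nat.nth (fmPred (subFn v) Θ) j) := by
  funext j
  apply propext
  unfold labPred subAt
  rw [seqFilterMap_get?]
  by_cases h : HasNth (fmPred (subFn v) Θ) j
  · rw [if_pos h]
    obtain ⟨a, ha, hsa⟩ := Nat.nth_mem (p := fmPred (subFn v) Θ) j h
    obtain ⟨a1, a2⟩ := a
    obtain ⟨⟨l1, l2⟩, hlm'⟩ := Option.isSome_iff_exists.mp hsa
    have hfst : l1 = a1 := subFn_fst hlm'
    subst hfst
    rw [ha, Option.bind_some]
    constructor
    · rintro ⟨m, hm⟩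
      rw [hlm'] at hm
      have h1 : l1 = π' := congrArg Prod.fst (Option.some.inj hm)
      subst h1
      exact ⟨h, ⟨⟨(l1, a2), ha, hsa⟩, ⟨a2, ha⟩⟩⟩
    · rintro ⟨-, hTf⟩
      obtain ⟨-, m0, hm0⟩ := hTf
      rw [ha] at hm0
      have h1 : l1 = π' := congrArg Prod.fst (Option.some.inj hm0)
      subst h1
      exact ⟨l2, hlm'⟩
  · rw [if_neg h]
    constructor
    · rintro ⟨m, hm⟩; cases hm
    · rintro ⟨hh, -⟩; exact absurd hh h

/-- The surviving positions within the π'-subsequence: depends only on `subseqOf π' Θ`. -/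
def SSP (v : IStr) (π' : Player) (Θ : Run) : ℕ → Prop :=
  fun j => ∃ lm, (subseqOf π' Θ).get? j = some lm ∧ (subFn v lm).isSome

lemma SSP_eq (v : IStr) (π' : Player) (Θ : Run) :
    SSP v π' Θ = fun j => HasNth (labPred π' Θ) j ∧
      TfP v π' Θ (Nat.nth (labPred π' Θ) j) := by
  funext j
  apply propext
  unfold SSP
  rw [subseqOf_eq, seqFilterMap_get?, fmPred_labf]
  by_cases h : HasNth (labPred π' Θ) j
  · rw [if_pos h]
    obtain ⟨m, hm⟩ := Nat.nth_mem (p := labPred π' Θ) j h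
    have hl : labf π' (π', m) = some (π', m) := by simp [labf]
    rw [hm, Option.bind_some, hl]
    constructor
    · rintro ⟨lm, hlm, hsome⟩
      obtain rfl : (π', m) = lm := Option.some.inj hlm
      exact ⟨h, ⟨⟨(π', m), hm, hsome⟩, ⟨m, hm⟩⟩⟩
    · rintro ⟨-, hTf⟩
      obtain ⟨⟨a, ha, hsa⟩, -⟩ := hTf
      rw [hm] at ha
      obtain rfl : (π', m) = a := Option.some.inj ha
      exact ⟨(π', m), rfl, hsa⟩
  · rw [if_neg h]
    constructor
    · rintro ⟨lm, hlm, -⟩; cases hlm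
    · rintro ⟨hh, -⟩; exact absurd hh h

/-- The main index-translation lemma. -/
lemma index_translate (v : IStr) (π' : Player) (Θ : Run) {n : ℕ}
    (hn : HasNth (SSP v π' Θ) n) :
    HasNth (labPred π' (subAt v Θ)) n ∧
    HasNth (labPred π' Θ) (Nat.nth (SSP v π' Θ) n) ∧
    Nat.nth (fmPred (subFn v) Θ) (Nat.nth (labPred π' (subAt v Θ)) n) =
      Nat.nth (labPred π' Θ) (Nat.nth (SSP v π' Θ) n) := by
  have hn2 : HasNth (fun j => HasNth (labPred π' Θ) j ∧
      TfP v π' Θ (Nat.nth (labPred π' Θ) j)) n := by rwa [SSP_eq] at hn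
  obtain ⟨hTf, heq1⟩ := nth_trans (TfP_sub_lab v π' Θ) hn2
  have heq1' : Nat.nth (TfP v π' Θ) n = Nat.nth (labPred π' Θ) (Nat.nth (SSP v π' Θ) n) := by
    rw [heq1]; congr 1; rw [SSP_eq]
  have hnK : HasNth (fun j => HasNth (fmPred (subFn v) Θ) j ∧
      TfP v π' Θ (Nat.nth (fmPred (subFn v) Θ) j)) n :=
    hasNthS_of_hasNthT (TfP_sub_K v π' Θ) hTf
  obtain ⟨-, heq2⟩ := nth_trans (TfP_sub_K v π' Θ) hnK
  have hnSub : HasNth (labPred π' (subAt v Θ)) n := by rwa [labPred_subAt]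
  refine ⟨hnSub, ?_, ?_⟩
  · have hmem := Nat.nth_mem (p := SSP v π' Θ) n hn
    exact ((congrFun (SSP_eq v π' Θ) _).mp hmem).1
  · have : Nat.nth (labPred π' (subAt v Θ)) n =
        Nat.nth (fun j => HasNth (fmPred (subFn v) Θ) j ∧
          TfP v π' Θ (Nat.nth (fmPred (subFn v) Θ) j)) n := by
      congr 1; rw [labPred_subAt]
    rw [this, ← heq2, heq1']

lemma hasNth_SSP_of_sub (v : IStr) (π' : Player) (Θ : Run) {n : ℕ}
    (hn : HasNth (labPred π' (subAt v Θ)) n) : HasNth (SSP v π' Θ) n := by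
  rw [labPred_subAt] at hn
  have hTf := (nth_trans (TfP_sub_K v π' Θ) hn).1
  rw [SSP_eq]
  exact hasNthS_of_hasNthT (TfP_sub_lab v π' Θ) hTf

end AuxDelay

/-- If `Δ` is a `π`-delay of `Γ`, then for every infinite bitstring `v`,
`Δ^{≼v}` is a `π`-delay of `Γ^{≼v}`. -/
theorem subAt_delay (π : Player) (Γ Δ : Run) (hd : Delay π Δ Γ) (v : IStr) :
    Delay π (subAt v Δ) (subAt v Γ) := by
  obtain ⟨h1, h2⟩ := hd
  constructor
  · intro π'
    rw [subseqOf_subAt, subseqOf_subAt, h1]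
  · intro n k hn hk hgt
    have hSn : HasNth (SSP v π Γ) n := hasNth_SSP_of_sub v π Γ hn
    have hSk : HasNth (SSP v π.opp Γ) k := hasNth_SSP_of_sub v π.opp Γ hk
    obtain ⟨-, hmΓ, eqΓn⟩ := index_translate v π Γ hSn
    obtain ⟨-, hkΓ, eqΓk⟩ := index_translate v π.opp Γ hSk
    have hSSn : SSP v π Δ = SSP v π Γ := by unfold SSP; rw [h1 π]
    have hSSk : SSP v π.opp Δ = SSP v π.opp Γ := by unfold SSP; rw [h1 π.opp]
    have hSnD : HasNth (SSP v π Δ) n := by rw [hSSn]; exact hSn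
    have hSkD : HasNth (SSP v π.opp Δ) k := by rw [hSSk]; exact hSk
    obtain ⟨hnD, -, eqΔn⟩ := index_translate v π Δ hSnD
    obtain ⟨hkD, -, eqΔk⟩ := index_translate v π.opp Δ hSkD
    have hKa : HasNth (fmPred (subFn v) Γ) (Nat.nth (labPred π (subAt v Γ)) n) := by
      have hmem := Nat.nth_mem (p := labPred π (subAt v Γ)) n hn
      exact ((congrFun (labPred_subAt v π Γ) _).mp hmem).1
    have hordΓ : Nat.nth (labPred π Γ) (Nat.nth (SSP v π Γ) n) >
        Nat.nth (labPred π.opp Γ) (Nat.nth (SSP v π.opp Γ) k) := by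
      rw [← eqΓn, ← eqΓk]
      exact nth_lt_nth'' hgt hKa
    have hordΔ := h2 _ _ hmΓ hkΓ hordΓ
    rw [← hSSn] at hordΔ
    rw [← hSSk] at hordΔ
    rw [← eqΔn, ← eqΔk] at hordΔ
    by_contra hle
    push_neg at hle
    have hKb : HasNth (fmPred (subFn v) Δ) (Nat.nth (labPred π.opp (subAt v Δ)) k) := by
      have hmem := Nat.nth_mem (p := labPred π.opp (subAt v Δ)) k hkD
      exact ((congrFun (labPred_subAt v π.opp Δ) _).mp hmem).1
    exact absurd (nth_le_nth'' hle hKb) (not_le.mpr hordΔ)
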